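/- Let M = p²q²r² with p, q, r distinct primes, and let E ⊆ ℤ_M satisfy: all elements of E are congruent to each other modulo p²qr. If |E| > max{q, r}, then {p²qr, p²q²r, p²qr²} ⊆ Div(E), i.e., there exist pairs of elements of E whose difference has gcd with M equal to p²qr, to p²q²r, and to p²qr², respectively. -/

import Mathlib

open Finset

/-- The division set `Div(E) = {gcd(a - a', M) : a, a' ∈ E}`. -/
def DivSet {M : ℕ} (E : Finset (ZMod M)) : Set ℕ :=
  {d | ∃ a ∈ E, ∃ b ∈ E, Nat.gcd ((a - b).val) M = d}

/-- If all elements of `E ⊆ ℤ_M` are congruent to each other mod `p²qr` and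
`|E| > max{q, r}`, then `{p²qr, p²q²r, p²qr²} ⊆ Div(E)`. -/
theorem stmt_6 (p q r M : ℕ) (hp : p.Prime) (hq : q.Prime) (hr : r.Prime)
    (hpq : p ≠ q) (hqr : q ≠ r) (hpr : p ≠ r) (hM : M = p ^ 2 * q ^ 2 * r ^ 2)
    (E : Finset (ZMod M))
    (hcong : ∀ a ∈ E, ∀ b ∈ E, (p ^ 2 * q * r) ∣ (a - b).val)
    (hcard : max q r < E.card) :
    ({p ^ 2 * q * r, p ^ 2 * q ^ 2 * r, p ^ 2 * q * r ^ 2} : Set ℕ) ⊆ DivSet E := by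
  have hp2 := hp.two_le
  have hq2 := hq.two_le
  have hr2 := hr.two_le
  set P := p ^ 2 * q * r with hP
  have hP0 : 0 < P := by positivity
  have hqr0 : 0 < q * r := by positivity
  have hMP : M = P * (q * r) := by rw [hM, hP]; ring
  have hM0 : 0 < M := by rw [hMP]; positivity
  haveI : NeZero M := ⟨hM0.ne'⟩
  haveI : NeZero q := ⟨hq.pos.ne'⟩
  haveI : NeZero r := ⟨hr.pos.ne'⟩
  have hEne : E.Nonempty := Finset.card_pos.mp (lt_of_le_of_lt (Nat.zero_le _) hcard)
  obtain ⟨a₀, ha₀⟩ := hEne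
  set u : ZMod M → ℕ := fun a => (a - a₀).val / P with hu
  have hPu : ∀ a ∈ E, P * u a = (a - a₀).val := fun a ha =>
    Nat.mul_div_cancel' (hcong a ha a₀ ha₀)
  -- t basics
  set t : ZMod M → ZMod M → ℕ := fun a b => (a - b).val / P with ht
  have hPt : ∀ a ∈ E, ∀ b ∈ E, P * t a b = (a - b).val := fun a ha b hb =>
    Nat.mul_div_cancel' (hcong a ha b hb)
  have htlt : ∀ a ∈ E, ∀ b ∈ E, t a b < q * r := by
    intro a ha b hb
    have h1 : (a - b).val < M := ZMod.val_lt _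
    have h2 := hPt a ha b hb
    have h3 : P * t a b < P * (q * r) := by rw [h2, ← hMP]; exact ZMod.val_lt _
    exact Nat.lt_of_mul_lt_mul_left h3
  have htne : ∀ a ∈ E, ∀ b ∈ E, a ≠ b → t a b ≠ 0 := by
    intro a ha b hb hab h0
    have h1 : (a - b).val = 0 := by rw [← hPt a ha b hb, h0, Nat.mul_zero]
    have h2 : a - b = 0 := by
      rwa [ZMod.val_eq_zero] at h1
    exact hab (by linear_combination h2)
  -- key congruence: t a b ≡ u a - u b  mod q*r  (as integers)
  have key : ∀ a ∈ E, ∀ b ∈ E,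
      ((q * r : ℕ) : ℤ) ∣ (t a b : ℤ) - (u a : ℤ) + (u b : ℤ) := by
    intro a ha b hb
    have h1 : (P : ℤ) * (t a b : ℤ) = ((a - b).val : ℤ) := by exact_mod_cast hPt a ha b hb
    have h2 : (P : ℤ) * (u a : ℤ) = ((a - a₀).val : ℤ) := by exact_mod_cast hPu a ha
    have h3 : (P : ℤ) * (u b : ℤ) = ((b - a₀).val : ℤ) := by exact_mod_cast hPu b hb
    have h4 : ((((a - b).val : ℤ) - ((a - a₀).val : ℤ) + ((b - a₀).val : ℤ) : ℤ) : ZMod M) = 0 := by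
      push_cast
      rw [ZMod.natCast_val, ZMod.natCast_val, ZMod.natCast_val,
        ZMod.cast_id, ZMod.cast_id, ZMod.cast_id]
      ring
    have h5 : (M : ℤ) ∣ ((a - b).val : ℤ) - ((a - a₀).val : ℤ) + ((b - a₀).val : ℤ) :=
      (ZMod.intCast_zmod_eq_zero_iff_dvd _ M).mp h4
    have h6 : (P : ℤ) * ((q * r : ℕ) : ℤ) ∣ (P : ℤ) * ((t a b : ℤ) - (u a : ℤ) + (u b : ℤ)) := by
      have hMcast : (M : ℤ) = (P : ℤ) * ((q * r : ℕ) : ℤ) := by exact_mod_cast hMP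
      have heq : (P : ℤ) * ((t a b : ℤ) - (u a : ℤ) + (u b : ℤ)) =
          ((a - b).val : ℤ) - ((a - a₀).val : ℤ) + ((b - a₀).val : ℤ) := by
        rw [← h1, ← h2, ← h3]; ring
      rw [← hMcast, heq]
      exact h5
    exact (mul_dvd_mul_iff_left (by exact_mod_cast hP0.ne' : (P : ℤ) ≠ 0)).mp h6
  -- divisibility transfer
  have step : ∀ s : ℕ, s ∣ q * r → ∀ a ∈ E, ∀ b ∈ E,
      (((u a : ZMod s) = (u b : ZMod s)) ↔ s ∣ t a b) := by
    intro s hs a ha b hb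
    have hk : (s : ℤ) ∣ (t a b : ℤ) - (u a : ℤ) + (u b : ℤ) :=
      dvd_trans (by exact_mod_cast hs) (key a ha b hb)
    rw [ZMod.natCast_eq_natCast_iff, Nat.modEq_iff_dvd, ← Int.natCast_dvd_natCast]
    constructor
    · intro h
      have : (s : ℤ) ∣ (t a b : ℤ) := by
        have := dvd_sub hk h
        convert this using 1; rfl; ring
      exact_mod_cast this
    · intro h
      have h' : (s : ℤ) ∣ (t a b : ℤ) := by exact_mod_cast h
      have := dvd_sub hk h'
      convert this using 1; rfl; ring
  -- gcd formula
  have gcdform : ∀ a ∈ E, ∀ b ∈ E,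
      Nat.gcd ((a - b).val) M = P * Nat.gcd (t a b) (q * r) := by
    intro a ha b hb
    rw [← hPt a ha b hb, hMP, Nat.gcd_mul_left]
  -- not both q and r divide t a b (for a ≠ b)
  have hnotboth : ∀ a ∈ E, ∀ b ∈ E, a ≠ b → ¬ (q ∣ t a b ∧ r ∣ t a b) := by
    intro a ha b hb hab ⟨h1, h2⟩
    have hco : Nat.Coprime q r := (Nat.coprime_primes hq hr).mpr hqr
    have h3 : q * r ∣ t a b := hco.mul_dvd_of_dvd_of_dvd h1 h2
    have h4 := htlt a ha b hb
    have h5 := htne a ha b hb hab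
    exact absurd (Nat.le_of_dvd (Nat.pos_of_ne_zero h5) h3) (not_le.mpr h4)
  -- pigeonhole for a modulus s with s < card E
  have pigeon : ∀ s : ℕ, s ∣ q * r → 0 < s → s < E.card →
      ∃ a ∈ E, ∃ b ∈ E, a ≠ b ∧ s ∣ t a b := by
    intro s hs hs0 hsc
    haveI : NeZero s := ⟨hs0.ne'⟩
    have hmap : ∀ a ∈ E, ((u a : ZMod s)) ∈ (Finset.univ : Finset (ZMod s)) := by
      intro a _; exact Finset.mem_univ _
    have hcardlt : (Finset.univ : Finset (ZMod s)).card < E.card := by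
      rwa [Finset.card_univ, ZMod.card]
    obtain ⟨a, ha, b, hb, hab, heq⟩ :=
      Finset.exists_ne_map_eq_of_card_lt_of_maps_to hcardlt hmap
    exact ⟨a, ha, b, hb, hab, (step s hs a ha b hb).mp heq⟩
  -- membership helper
  intro d hd
  simp only [Set.mem_insert_iff, Set.mem_singleton_iff] at hd
  -- gcd computations per case
  have caseq : ∀ a ∈ E, ∀ b ∈ E, a ≠ b → q ∣ t a b → Nat.gcd ((a - b).val) M = p ^ 2 * q ^ 2 * r := by
    intro a ha b hb hab hqd
    have hrnd : ¬ r ∣ t a b := fun hr' => hnotboth a ha b hb hab ⟨hqd, hr'⟩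
    have hqg : q ∣ Nat.gcd (t a b) (q * r) := Nat.dvd_gcd hqd (dvd_mul_right q r)
    obtain ⟨e, he⟩ := hqg
    have her : e ∣ r := by
      have h1 : Nat.gcd (t a b) (q * r) ∣ q * r := Nat.gcd_dvd_right _ _
      rw [he] at h1
      exact (mul_dvd_mul_iff_left hq.pos.ne').mp h1
    rcases (Nat.Prime.eq_one_or_self_of_dvd hr e her) with he1 | her'
    · rw [gcdform a ha b hb, he, he1, hP]; ring
    · exfalso
      have hrg : r ∣ Nat.gcd (t a b) (q * r) := by
        rw [he, her']; exact dvd_mul_left r q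
      exact hrnd (hrg.trans (Nat.gcd_dvd_left _ _))
  have caser : ∀ a ∈ E, ∀ b ∈ E, a ≠ b → r ∣ t a b →
      Nat.gcd ((a - b).val) M = p ^ 2 * q * r ^ 2 := by
    intro a ha b hb hab hrd
    have hqnd : ¬ q ∣ t a b := fun hq' => hnotboth a ha b hb hab ⟨hq', hrd⟩
    have hrg : r ∣ Nat.gcd (t a b) (q * r) := Nat.dvd_gcd hrd (dvd_mul_left r q)
    obtain ⟨e, he⟩ := hrg
    have heq' : e ∣ q := by
      have h1 : Nat.gcd (t a b) (q * r) ∣ q * r := Nat.gcd_dvd_right _ _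
      rw [he] at h1
      have h2 : r * e ∣ r * q := by rwa [mul_comm q r] at h1
      exact (mul_dvd_mul_iff_left hr.pos.ne').mp h2
    rcases (Nat.Prime.eq_one_or_self_of_dvd hq e heq') with he1 | heq''
    · rw [gcdform a ha b hb, he, he1, hP]; ring
    · exfalso
      have hqg : q ∣ Nat.gcd (t a b) (q * r) := by
        rw [he, heq'']; exact dvd_mul_left q r
      exact hqnd (hqg.trans (Nat.gcd_dvd_left _ _))
  have casenone : ∀ a ∈ E, ∀ b ∈ E, ¬ q ∣ t a b → ¬ r ∣ t a b →
      Nat.gcd ((a - b).val) M = p ^ 2 * q * r := by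
    intro a ha b hb hqnd hrnd
    have hcoq : Nat.Coprime (t a b) q := (Nat.coprime_comm.mp ((hq.coprime_iff_not_dvd).mpr hqnd))
    have hcor : Nat.Coprime (t a b) r := (Nat.coprime_comm.mp ((hr.coprime_iff_not_dvd).mpr hrnd))
    have h1 : Nat.Coprime (t a b) (q * r) := Nat.Coprime.mul_right hcoq hcor
    rw [gcdform a ha b hb, h1, hP]; ring
  -- rainbow: a pair with t not divisible by q nor r
  have rainbow : ∃ a ∈ E, ∃ b ∈ E, ¬ q ∣ t a b ∧ ¬ r ∣ t a b := by
    by_contra hcon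
    push_neg at hcon
    -- every pair has q ∣ t or r ∣ t, i.e. f-collision or g-collision
    have hall : ∀ a ∈ E, ∀ b ∈ E, q ∣ t a b ∨ r ∣ t a b := by
      intro a ha b hb
      by_cases h : q ∣ t a b
      · exact Or.inl h
      · exact Or.inr (hcon a ha b hb h)
    obtain ⟨a₁, ha₁, a₂, ha₂, hne, hq12⟩ :=
      pigeon q (dvd_mul_right q r) hq.pos (lt_of_le_of_lt (le_max_left q r) hcard)
    have hr12 : ¬ r ∣ t a₁ a₂ := fun h => hnotboth a₁ ha₁ a₂ ha₂ hne ⟨hq12, h⟩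
    -- every c ∈ E has q ∣ t c a₁
    have hfc : ∀ c ∈ E, q ∣ t c a₁ := by
      intro c hc
      rcases hall c hc a₁ ha₁ with h | h
      · exact h
      · -- r ∣ t c a₁; then consider c vs a₂
        rcases hall c hc a₂ ha₂ with h' | h'
        · -- q ∣ t c a₂ ; t c a₁ ≡ t c a₂ + t a₂ a₁ mod q ... use u-values
          have e1 := (step q (dvd_mul_right q r) c hc a₂ ha₂).mpr h'
          have e2 := (step q (dvd_mul_right q r) a₁ ha₁ a₂ ha₂).mpr hq12
          exact (step q (dvd_mul_right q r) c hc a₁ ha₁).mp (e1.trans e2.symm)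
        · -- r ∣ t c a₁ and r ∣ t c a₂ forces r ∣ t a₁ a₂, contradiction
          exfalso
          apply hr12
          have e1 := (step r (dvd_mul_left r q) c hc a₁ ha₁).mpr h
          have e2 := (step r (dvd_mul_left r q) c hc a₂ ha₂).mpr h'
          exact (step r (dvd_mul_left r q) a₁ ha₁ a₂ ha₂).mp (e1.symm.trans e2)
    -- then the map a ↦ u a mod r is injective on E, so |E| ≤ r
    have hinj : Set.InjOn (fun a => ((u a : ZMod r))) E := by
      intro a ha b hb hab
      by_contra hne'
      have hrt : r ∣ t a b := (step r (dvd_mul_left r q) a ha b hb).mp hab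
      have hqt : q ∣ t a b := by
        have e1 := (step q (dvd_mul_right q r) a ha a₁ ha₁).mpr (hfc a ha)
        have e2 := (step q (dvd_mul_right q r) b hb a₁ ha₁).mpr (hfc b hb)
        exact (step q (dvd_mul_right q r) a ha b hb).mp (e1.trans e2.symm)
      exact hnotboth a ha b hb hne' ⟨hqt, hrt⟩
    have hle : E.card ≤ r := by
      have := Finset.card_le_card_of_injOn (fun a => ((u a : ZMod r)))
        (fun a _ => Finset.mem_univ _) hinj
      rwa [Finset.card_univ, ZMod.card] at this
    exact absurd hle (not_le.mpr (lt_of_le_of_lt (le_max_right q r) hcard))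
  rcases hd with hd | hd | hd
  · -- d = p^2*q*r
    obtain ⟨a, ha, b, hb, hqnd, hrnd⟩ := rainbow
    exact ⟨a, ha, b, hb, by rw [casenone a ha b hb hqnd hrnd, hd, hP]⟩
  · -- d = p^2*q^2*r
    obtain ⟨a, ha, b, hb, hne, hdt⟩ :=
      pigeon q (dvd_mul_right q r) hq.pos (lt_of_le_of_lt (le_max_left q r) hcard)
    exact ⟨a, ha, b, hb, by rw [caseq a ha b hb hne hdt, hd]⟩
  · -- d = p^2*q*r^2
    obtain ⟨a, ha, b, hb, hne, hdt⟩ :=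
      pigeon r (dvd_mul_left r q) hr.pos (lt_of_le_of_lt (le_max_right q r) hcard)
    exact ⟨a, ha, b, hb, by rw [caser a ha b hb hne hdt, hd]⟩
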